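/- arXiv:1810.08509 — 2 statements merged into one kernel-verified Lean document; each statement's English description precedes it below -/
import Mathlib

section
/- Let 0 < ε < t be real numbers and define π = (e^ε − 1)/(e^t − 1). Then 1 − π + e^{−t} · π > e^{−ε}. -/
theorem sample_inequality_lower (ε t : ℝ) (hε : 0 < ε) (hεt : ε < t) :
    1 - (Real.exp ε - 1) / (Real.exp t - 1) +
      Real.exp (-t) * ((Real.exp ε - 1) / (Real.exp t - 1)) > Real.exp (-ε) := by
  have h1 : (0:ℝ) < Real.exp t - 1 := by
    linarith [Real.add_one_lt_exp (ne_of_gt (lt_trans hε hεt))]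
  have h2 : (0:ℝ) < Real.exp ε - 1 := by
    linarith [Real.add_one_lt_exp (ne_of_gt hε)]
  have h3 : Real.exp (-t) < Real.exp (-ε) := Real.exp_lt_exp.mpr (by linarith)
  have h4 : Real.exp (-ε) * Real.exp ε = 1 := by
    rw [← Real.exp_add]; simp
  have h5 : Real.exp (-t) * Real.exp t = 1 := by
    rw [← Real.exp_add]; simp
  have h6 : (0:ℝ) < Real.exp (-t) := Real.exp_pos _
  rw [gt_iff_lt, ← sub_pos]
  field_simp
  nlinarith [mul_pos h6 h2, mul_pos h6 h1, mul_pos (sub_pos.mpr h3) h2]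
end

section
/- If the two neighboring rating matrices D and D′ differ only in entry (p,q) with |r_{pq} − r′_{pq}| ≤ Δ and the same support indicators I_{ij}, and V̄ minimizes the perturbed objectives for both with respective noise matrices [η_j] and [η′_j], then η_j = η′_j for all j ≠ q and ‖η_q − η′_q‖₂ = |r_{pq} − r′_{pq}| · ‖u_p‖₂ ≤ Δ whenever ‖u_p‖₂ ≤ 1. -/
/-- The perturbed PMF objective `Ẽ(V)` with user profiles `u` fixed. -/
noncomputable def perturbedObjective {d N M : ℕ}
    (u : Fin N → EuclideanSpace ℝ (Fin d)) (I : Fin N → Fin M → ℝ)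
    (r : Fin N → Fin M → ℝ) (lv : ℝ) (η : Fin M → EuclideanSpace ℝ (Fin d))
    (V : Fin M → EuclideanSpace ℝ (Fin d)) : ℝ :=
  (1 / 2) * ∑ i : Fin N, ∑ j : Fin M, I i j * (r i j - inner ℝ (u i) (V j)) ^ 2
    + (lv / 2) * ∑ j : Fin M, ‖V j‖ ^ 2
    + ∑ j : Fin M, (inner ℝ (η j) (V j) : ℝ)

/-- First-order condition at a minimizer of the perturbed objective. -/
lemma foc_noise {d N M : ℕ}
    (u : Fin N → EuclideanSpace ℝ (Fin d)) (I : Fin N → Fin M → ℝ)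
    (hI : ∀ i j, 0 ≤ I i j)
    (r : Fin N → Fin M → ℝ) (lv : ℝ) (hlv : 0 < lv)
    (η : Fin M → EuclideanSpace ℝ (Fin d))
    (Vb : Fin M → EuclideanSpace ℝ (Fin d))
    (hmin : ∀ V, perturbedObjective u I r lv η Vb ≤ perturbedObjective u I r lv η V)
    (j : Fin M) :
    η j = (∑ i : Fin N, (I i j * (r i j - (inner ℝ (u i) (Vb j) : ℝ))) • u i) - lv • Vb j := by
  set G : EuclideanSpace ℝ (Fin d) :=
    lv • Vb j + η j - ∑ i : Fin N, (I i j * (r i j - (inner ℝ (u i) (Vb j) : ℝ))) • u i with hGdef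
  -- sum over Fin M of a function evaluated at an updated family
  have hupd : ∀ (g : Fin M → EuclideanSpace ℝ (Fin d) → ℝ) (x : EuclideanSpace ℝ (Fin d)),
      ∑ j' : Fin M, g j' (Function.update Vb j x j')
        = (∑ j' : Fin M, g j' (Vb j')) - g j (Vb j) + g j x := by
    intro g x
    rw [Finset.sum_eq_sum_sdiff_singleton_add (Finset.mem_univ j)
          (fun j' => g j' (Function.update Vb j x j')),
        Finset.sum_eq_sum_sdiff_singleton_add (Finset.mem_univ j) (fun j' => g j' (Vb j'))]
    have hcong : ∑ j' ∈ Finset.univ \ {j}, g j' (Function.update Vb j x j')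
        = ∑ j' ∈ Finset.univ \ {j}, g j' (Vb j') := by
      refine Finset.sum_congr rfl fun j' hj' => ?_
      have hne : j' ≠ j := by
        simpa using (Finset.mem_sdiff.mp hj').2
      rw [Function.update_of_ne hne]
    rw [hcong, Function.update_self]
    ring
  have hupd2 : ∀ (g : Fin N → Fin M → EuclideanSpace ℝ (Fin d) → ℝ)
      (x : EuclideanSpace ℝ (Fin d)),
      ∑ i : Fin N, ∑ j' : Fin M, g i j' (Function.update Vb j x j')
        = (∑ i : Fin N, ∑ j' : Fin M, g i j' (Vb j')) - (∑ i : Fin N, g i j (Vb j))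
          + ∑ i : Fin N, g i j x := by
    intro g x
    calc ∑ i : Fin N, ∑ j' : Fin M, g i j' (Function.update Vb j x j')
        = ∑ i : Fin N, ((∑ j' : Fin M, g i j' (Vb j')) - g i j (Vb j) + g i j x) :=
          Finset.sum_congr rfl fun i _ => hupd (g i) x
      _ = _ := by rw [Finset.sum_add_distrib, Finset.sum_sub_distrib]
  -- difference of objectives when updating coordinate j
  have hdiff : ∀ x : EuclideanSpace ℝ (Fin d),
      perturbedObjective u I r lv η (Function.update Vb j x)
        = perturbedObjective u I r lv η Vb
          + ((1 / 2) * ((∑ i : Fin N, I i j * (r i j - (inner ℝ (u i) x : ℝ)) ^ 2)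
              - ∑ i : Fin N, I i j * (r i j - (inner ℝ (u i) (Vb j) : ℝ)) ^ 2)
            + (lv / 2) * (‖x‖ ^ 2 - ‖Vb j‖ ^ 2)
            + ((inner ℝ (η j) x : ℝ) - (inner ℝ (η j) (Vb j) : ℝ))) := by
    intro x
    have e1 : ∑ i : Fin N, ∑ j' : Fin M,
        I i j' * (r i j' - (inner ℝ (u i) (Function.update Vb j x j') : ℝ)) ^ 2
        = (∑ i : Fin N, ∑ j' : Fin M, I i j' * (r i j' - (inner ℝ (u i) (Vb j') : ℝ)) ^ 2)
          - (∑ i : Fin N, I i j * (r i j - (inner ℝ (u i) (Vb j) : ℝ)) ^ 2)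
          + ∑ i : Fin N, I i j * (r i j - (inner ℝ (u i) x : ℝ)) ^ 2 :=
      hupd2 (fun i j' v => I i j' * (r i j' - (inner ℝ (u i) v : ℝ)) ^ 2) x
    have e2 : ∑ j' : Fin M, ‖Function.update Vb j x j'‖ ^ 2
        = (∑ j' : Fin M, ‖Vb j'‖ ^ 2) - ‖Vb j‖ ^ 2 + ‖x‖ ^ 2 :=
      hupd (fun _ v => ‖v‖ ^ 2) x
    have e3 : ∑ j' : Fin M, (inner ℝ (η j') (Function.update Vb j x j') : ℝ)
        = (∑ j' : Fin M, (inner ℝ (η j') (Vb j') : ℝ)) - (inner ℝ (η j) (Vb j) : ℝ)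
          + (inner ℝ (η j) x : ℝ) :=
      hupd (fun j' v => (inner ℝ (η j') v : ℝ)) x
    unfold perturbedObjective
    rw [e1, e2, e3]
    ring
  -- key inequality: along any direction, the quadratic in t is nonnegative
  have key : ∀ (w : EuclideanSpace ℝ (Fin d)) (t : ℝ),
      0 ≤ t * (inner ℝ G w : ℝ)
        + t ^ 2 * ((1 / 2) * (∑ i : Fin N, I i j * (inner ℝ (u i) w : ℝ) ^ 2)
            + (lv / 2) * ‖w‖ ^ 2) := by
    intro w t
    have h0 := hmin (Function.update Vb j (Vb j + t • w))
    rw [hdiff (Vb j + t • w)] at h0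
    have hb : 0 ≤ (1 / 2) * ((∑ i : Fin N, I i j * (r i j - (inner ℝ (u i) (Vb j + t • w) : ℝ)) ^ 2)
              - ∑ i : Fin N, I i j * (r i j - (inner ℝ (u i) (Vb j) : ℝ)) ^ 2)
            + (lv / 2) * (‖Vb j + t • w‖ ^ 2 - ‖Vb j‖ ^ 2)
            + ((inner ℝ (η j) (Vb j + t • w) : ℝ) - (inner ℝ (η j) (Vb j) : ℝ)) := by linarith
    have hGw : (inner ℝ G w : ℝ)
        = lv * (inner ℝ (Vb j) w : ℝ) + (inner ℝ (η j) w : ℝ)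
          - ∑ i : Fin N, (I i j * (r i j - (inner ℝ (u i) (Vb j) : ℝ))) * (inner ℝ (u i) w : ℝ) := by
      rw [hGdef]
      rw [inner_sub_left, inner_add_left, real_inner_smul_left, sum_inner]
      simp only [real_inner_smul_left]
    have h1 : ∑ i : Fin N, I i j * (r i j - (inner ℝ (u i) (Vb j + t • w) : ℝ)) ^ 2
        = ∑ i : Fin N, (I i j * (r i j - (inner ℝ (u i) (Vb j) : ℝ)) ^ 2
            - t * (2 * ((I i j * (r i j - (inner ℝ (u i) (Vb j) : ℝ))) * (inner ℝ (u i) w : ℝ)))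
            + t ^ 2 * (I i j * (inner ℝ (u i) w : ℝ) ^ 2)) := by
      refine Finset.sum_congr rfl fun i _ => ?_
      rw [inner_add_right, real_inner_smul_right]
      ring
    have h2 : ‖Vb j + t • w‖ ^ 2
        = ‖Vb j‖ ^ 2 + 2 * (t * (inner ℝ (Vb j) w : ℝ)) + t ^ 2 * ‖w‖ ^ 2 := by
      rw [@norm_add_sq_real, real_inner_smul_right, norm_smul]
      simp [Real.norm_eq_abs, mul_pow, sq_abs]
    have h3 : (inner ℝ (η j) (Vb j + t • w) : ℝ)
        = (inner ℝ (η j) (Vb j) : ℝ) + t * (inner ℝ (η j) w : ℝ) := by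
      rw [inner_add_right, real_inner_smul_right]
    rw [h1, h2, h3] at hb
    rw [Finset.sum_add_distrib, Finset.sum_sub_distrib, ← Finset.mul_sum, ← Finset.mul_sum,
        ← Finset.mul_sum] at hb
    rw [hGw]
    linarith [hb]
  -- the quadratic coefficient for direction G
  set c : ℝ := (1 / 2) * (∑ i : Fin N, I i j * (inner ℝ (u i) G : ℝ) ^ 2)
      + (lv / 2) * ‖G‖ ^ 2 with hc
  have hc0 : 0 ≤ c := by
    have h1 : 0 ≤ ∑ i : Fin N, I i j * (inner ℝ (u i) G : ℝ) ^ 2 :=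
      Finset.sum_nonneg fun i _ => mul_nonneg (hI i j) (sq_nonneg _)
    have h2 : 0 ≤ ‖G‖ ^ 2 := sq_nonneg _
    have := hlv.le
    positivity
  have hL : (inner ℝ G G : ℝ) = 0 := by
    set L : ℝ := (inner ℝ G G : ℝ) with hLdef
    have hL0 : 0 ≤ L := real_inner_self_nonneg
    have hcc : (0:ℝ) < c + 1 := by linarith
    have hne : c + 1 ≠ 0 := ne_of_gt hcc
    have hk := key G (-L / (c + 1))
    rw [← hc] at hk
    have h5 : (c + 1) ^ 2 * (-L / (c + 1) * (inner ℝ G G : ℝ)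
          + (-L / (c + 1)) ^ 2 * c) = -(L ^ 2) * (c + 1) + L ^ 2 * c := by
      rw [← hLdef]
      field_simp
    have h6 : 0 ≤ -(L ^ 2) * (c + 1) + L ^ 2 * c := by
      rw [← h5]
      exact mul_nonneg (sq_nonneg _) hk
    have h7 : -(L ^ 2) * (c + 1) + L ^ 2 * c = -(L ^ 2) := by ring
    have hL2 : L ^ 2 = 0 := le_antisymm (by linarith [h7 ▸ h6]) (sq_nonneg L)
    have : L = 0 := by
      exact pow_eq_zero_iff two_ne_zero |>.mp hL2
    rw [hLdef] at this
    exact this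
  have hG0 : G = 0 := inner_self_eq_zero.mp hL
  have hsum : lv • Vb j + η j
      = ∑ i : Fin N, (I i j * (r i j - (inner ℝ (u i) (Vb j) : ℝ))) • u i := by
    have := sub_eq_zero.mp (hGdef ▸ hG0)
    exact this
  have : η j + lv • Vb j = ∑ i : Fin N, (I i j * (r i j - (inner ℝ (u i) (Vb j) : ℝ))) • u i := by
    rw [add_comm]; exact hsum
  exact eq_sub_of_add_eq this

theorem noise_sensitivity {d N M : ℕ}
    (u : Fin N → EuclideanSpace ℝ (Fin d)) (I : Fin N → Fin M → ℝ)
    (hI : ∀ i j, I i j = 0 ∨ I i j = 1)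
    (r r' : Fin N → Fin M → ℝ) (p : Fin N) (q : Fin M) (Δ : ℝ)
    (hneighbor : ∀ i j, (i, j) ≠ (p, q) → r i j = r' i j)
    (hΔ : |r p q - r' p q| ≤ Δ)
    (hIpq : I p q = 1)
    (hu : ‖u p‖ ≤ 1)
    (lv : ℝ) (hlv : 0 < lv)
    (η η' : Fin M → EuclideanSpace ℝ (Fin d))
    (Vb : Fin M → EuclideanSpace ℝ (Fin d))
    (hmin : ∀ V, perturbedObjective u I r lv η Vb ≤ perturbedObjective u I r lv η V)
    (hmin' : ∀ V, perturbedObjective u I r' lv η' Vb ≤ perturbedObjective u I r' lv η' V) :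
    (∀ j : Fin M, j ≠ q → η j = η' j) ∧
      ‖η q - η' q‖ = |r p q - r' p q| * ‖u p‖ ∧ ‖η q - η' q‖ ≤ Δ := by
  have hI' : ∀ i j, 0 ≤ I i j := by
    intro i j
    rcases hI i j with h | h <;> rw [h] <;> norm_num
  have e := foc_noise u I hI' r lv hlv η Vb hmin
  have e' := foc_noise u I hI' r' lv hlv η' Vb hmin'
  have hsub : ∀ j : Fin M, η j - η' j = ∑ i : Fin N, (I i j * (r i j - r' i j)) • u i := by
    intro j
    rw [e j, e' j, sub_sub_sub_cancel_right, ← Finset.sum_sub_distrib]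
    refine Finset.sum_congr rfl fun i _ => ?_
    rw [← sub_smul]
    congr 1
    ring
  have hq : η q - η' q = (r p q - r' p q) • u p := by
    rw [hsub q]
    rw [Finset.sum_eq_single p]
    · rw [hIpq, one_mul]
    · intro i _ hip
      have : r i q = r' i q := hneighbor i q (by simp [hip])
      rw [this, sub_self, mul_zero, zero_smul]
    · intro h
      exact absurd (Finset.mem_univ p) h
  refine ⟨?_, ?_, ?_⟩
  · intro j hj
    have : η j - η' j = 0 := by
      rw [hsub j]
      refine Finset.sum_eq_zero fun i _ => ?_
      have : r i j = r' i j := hneighbor i j (by simp [hj])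
      rw [this, sub_self, mul_zero, zero_smul]
    exact sub_eq_zero.mp this
  · rw [hq, norm_smul, Real.norm_eq_abs]
  · rw [hq, norm_smul, Real.norm_eq_abs]
    calc |r p q - r' p q| * ‖u p‖ ≤ |r p q - r' p q| * 1 :=
          mul_le_mul_of_nonneg_left hu (abs_nonneg _)
      _ ≤ Δ := by rwa [mul_one]
end
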